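/- Let 0 < p < 2 and let a ≥ b ≥ 0 be real numbers with a > 0. Then a^p - b^p = (p sin(pπ/2)/π) · ∫₀^∞ z^(p-1) log((z² + a²)/(z² + b²)) dz. -/

import Mathlib

open Real MeasureTheory Set


/-- Real Beta integral value for exponents q, 1-q. -/
lemma beta_ioo (q : ℝ) (hq0 : 0 < q) (hq1 : q < 1) :
    ∫ t in Ioo (0:ℝ) 1, t ^ (q - 1) * (1 - t) ^ (-q) = π / Real.sin (π * q) := by
  have hsin : Real.sin (π * q) ≠ 0 := by
    have := Real.sin_pos_of_pos_of_lt_pi (x := π * q) (by positivity)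
      (by nlinarith [Real.pi_pos])
    exact this.ne'
  have hβ : Complex.Gamma q * Complex.Gamma (1 - q) =
      Complex.Gamma ((q : ℂ) + (1 - q)) * Complex.betaIntegral q (1 - q) :=
    Complex.Gamma_mul_Gamma_eq_betaIntegral (by simpa using hq0) (by simp [hq1])
  rw [Complex.Gamma_mul_Gamma_one_sub] at hβ
  have h1 : ((q : ℂ) + (1 - q)) = 1 := by ring
  rw [h1, Complex.Gamma_one, one_mul] at hβ
  -- betaIntegral equals ofReal of the real integral
  have h2 : Complex.betaIntegral q (1 - q) =
      ((∫ t in (0:ℝ)..1, t ^ (q - 1) * (1 - t) ^ (-q) : ℝ) : ℂ) := by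
    rw [Complex.betaIntegral, ← intervalIntegral.integral_ofReal]
    refine intervalIntegral.integral_congr fun x hx => ?_
    rw [uIcc_of_le (by norm_num : (0:ℝ) ≤ 1)] at hx
    obtain ⟨hx0, hx1⟩ := hx
    rw [Complex.ofReal_mul, Complex.ofReal_cpow hx0,
      Complex.ofReal_cpow (by linarith : (0:ℝ) ≤ 1 - x)]
    push_cast
    ring_nf
  have h3 : (∫ t in (0:ℝ)..1, t ^ (q - 1) * (1 - t) ^ (-q) : ℝ) =
      ∫ t in Ioo (0:ℝ) 1, t ^ (q - 1) * (1 - t) ^ (-q) := by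
    rw [intervalIntegral.integral_of_le (by norm_num : (0:ℝ) ≤ 1),
      MeasureTheory.integral_Ioc_eq_integral_Ioo]
  rw [h2, h3] at hβ
  have : ((∫ t in Ioo (0:ℝ) 1, t ^ (q - 1) * (1 - t) ^ (-q) : ℝ) : ℂ) =
      ((π / Real.sin (π * q) : ℝ) : ℂ) := by
    rw [← hβ]
    push_cast [Complex.ofReal_sin]
    ring_nf
  exact_mod_cast this


lemma subst_io (q : ℝ) :
    ∫ x in Ioi (0:ℝ), x ^ (q - 1) / (1 + x) =
      ∫ t in Ioo (0:ℝ) 1, t ^ (q - 1) * (1 - t) ^ (-q) := by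
  have himg : (fun t : ℝ => t / (1 - t)) '' Ioo 0 1 = Ioi 0 := by
    ext x
    constructor
    · rintro ⟨t, ⟨ht0, ht1⟩, rfl⟩
      exact div_pos ht0 (by linarith)
    · intro hx
      refine ⟨x / (1 + x), ⟨div_pos hx (by linarith [mem_Ioi.mp hx]), ?_⟩, ?_⟩
      · rw [div_lt_one (by linarith [mem_Ioi.mp hx])]; linarith [mem_Ioi.mp hx]
      · have h1 : (1:ℝ) + x ≠ 0 := by have := mem_Ioi.mp hx; positivity
        field_simp
        ring
  have hderiv : ∀ t ∈ Ioo (0:ℝ) 1,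
      HasDerivWithinAt (fun t : ℝ => t / (1 - t)) ((1 - t)⁻¹ ^ 2) (Ioo 0 1) t := by
    intro t ht
    have h1 : (1:ℝ) - t ≠ 0 := by have := ht.2; intro h; linarith [sub_eq_zero.mp h]
    have := (hasDerivAt_id t).div ((hasDerivAt_const t (1:ℝ)).sub (hasDerivAt_id t)) h1
    refine (this.hasDerivWithinAt (s := Ioo 0 1)).congr_deriv ?_
    simp only [Pi.sub_apply, id]
    rw [inv_pow]
    field_simp
    ring
  have hinj : InjOn (fun t : ℝ => t / (1 - t)) (Ioo 0 1) := by
    intro s hs t ht h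
    have hs1 : (1:ℝ) - s ≠ 0 := by have := hs.2; intro hh; linarith [sub_eq_zero.mp hh]
    have ht1 : (1:ℝ) - t ≠ 0 := by have := ht.2; intro hh; linarith [sub_eq_zero.mp hh]
    field_simp at h
    linarith
  have := integral_image_eq_integral_abs_deriv_smul measurableSet_Ioo hderiv hinj
    (fun x => x ^ (q - 1) / (1 + x))
  rw [himg] at this
  rw [this]
  refine setIntegral_congr_fun measurableSet_Ioo fun t ht => ?_
  obtain ⟨ht0, ht1⟩ := ht
  have h1 : (0:ℝ) < 1 - t := by linarith
  have h2 : (1:ℝ) + t / (1 - t) = (1 - t)⁻¹ := by field_simp; ring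
  rw [smul_eq_mul, h2, Real.div_rpow ht0.le h1.le, abs_of_pos (by positivity)]
  rw [Real.rpow_neg h1.le]
  have h3 : (1 - t) ^ (q - 1) ≠ 0 := by positivity
  have h4 : (1 - t) ^ q ≠ 0 := by positivity
  have h5 : (1 - t) ^ (q - 1) * (1 - t) = (1 - t) ^ q := by
    rw [← Real.rpow_add_one h1.ne' (q - 1)]
    ring_nf
  field_simp
  linear_combination -h5


lemma mellin_val (p t : ℝ) (hp0 : 0 < p) (hp2 : p < 2) (ht : 0 < t) :
    ∫ z in Ioi (0:ℝ), z ^ (p - 1) / (z ^ 2 + t ^ 2) =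
      t ^ (p - 2) * (π / (2 * Real.sin (π * (p / 2)))) := by
  set q := p / 2 with hq
  have hq0 : 0 < q := by positivity
  have hq1 : q < 1 := by simp only [hq]; linarith
  -- final value of the basic integral (to be supplied: subst_io + beta_ioo)
  have hbase : ∫ x in Ioi (0:ℝ), x ^ (q - 1) / (1 + x) = π / Real.sin (π * q) := by
    rw [subst_io q, beta_ioo q hq0 hq1]
  -- scaling: x = t^2 * y
  have hscale : ∫ x in Ioi (0:ℝ), x ^ (q - 1) / (x + t ^ 2) =
      t ^ (p - 2) * (π / Real.sin (π * q)) := by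
    have ht2 : (0:ℝ) < t ^ 2 := by positivity
    have := MeasureTheory.integral_comp_mul_left_Ioi
      (fun x => x ^ (q - 1) / (x + t ^ 2)) 0 ht2
    rw [mul_zero] at this
    have heq : ∀ x ∈ Ioi (0:ℝ), (t ^ 2 * x) ^ (q - 1) / (t ^ 2 * x + t ^ 2) =
        (t ^ 2) ^ (q - 2) * (x ^ (q - 1) / (1 + x)) := by
      intro x hx
      have hx0 : (0:ℝ) < x := hx
      rw [Real.mul_rpow ht2.le hx0.le]
      have h1 : t ^ 2 * x + t ^ 2 = t ^ 2 * (1 + x) := by ring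
      rw [h1]
      have h2 : (t ^ 2) ^ (q - 2) = (t ^ 2) ^ (q - 1) / (t ^ 2) := by
        rw [eq_div_iff ht2.ne', ← Real.rpow_add_one ht2.ne',
          show q - 2 + 1 = q - 1 by ring]
      rw [h2]
      field_simp
    rw [setIntegral_congr_fun measurableSet_Ioi heq] at this
    simp only [MeasureTheory.integral_const_mul] at this
    rw [hbase, smul_eq_mul] at this
    have hX : ∫ x in Ioi (0:ℝ), x ^ (q - 1) / (x + t ^ 2) =
        t ^ 2 * ((t ^ 2) ^ (q - 2) * (π / Real.sin (π * q))) := by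
      rw [this]
      field_simp
    rw [hX]
    have h4 : t ^ 2 * (t ^ 2) ^ (q - 2) = t ^ (p - 2) := by
      rw [mul_comm, ← Real.rpow_add_one ht2.ne', show q - 2 + 1 = q - 1 by ring,
        ← Real.rpow_natCast t 2, ← Real.rpow_mul ht.le,
        show ((2:ℕ):ℝ) * (q - 1) = p - 2 by push_cast [hq]; ring]
    rw [← mul_assoc, h4]
  -- substitution z = sqrt x, i.e. x = z^2
  have hsub := MeasureTheory.integral_comp_rpow_Ioi_of_pos
    (g := fun x => (1/2) * (x ^ (q - 1) / (x + t ^ 2))) (p := 2) (by norm_num)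
  have heq2 : ∀ z ∈ Ioi (0:ℝ), ((2:ℝ) * z ^ ((2:ℝ) - 1)) •
      ((1/2) * ((z ^ (2:ℝ)) ^ (q - 1) / (z ^ (2:ℝ) + t ^ 2))) =
      z ^ (p - 1) / (z ^ 2 + t ^ 2) := by
    intro z hz
    have hz0 : (0:ℝ) < z := hz
    rw [smul_eq_mul]
    rw [show ((2:ℝ) - 1) = 1 by norm_num, Real.rpow_one]
    rw [← Real.rpow_natCast z 2]
    rw [← Real.rpow_mul hz0.le]
    have : (2:ℝ) * (q - 1) = p - 2 := by rw [hq]; ring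
    rw [this]
    have h5 : z * z ^ (p - 2) = z ^ (p - 1) := by
      rw [mul_comm, ← Real.rpow_add_one hz0.ne', show p - 2 + 1 = p - 1 by ring]
    push_cast
    field_simp
    nlinarith [h5, Real.rpow_pos_of_pos hz0 (p-2), Real.rpow_pos_of_pos hz0 (p-1),
       sq_nonneg z, sq_nonneg t]
  rw [setIntegral_congr_fun measurableSet_Ioi heq2] at hsub
  rw [hsub]
  simp only [MeasureTheory.integral_const_mul]
  rw [hscale]
  ring


lemma mellin_integrable (p t : ℝ) (hp0 : 0 < p) (hp2 : p < 2) (ht : 0 < t) :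
    IntegrableOn (fun z => z ^ (p - 1) / (z ^ 2 + t ^ 2)) (Ioi (0:ℝ)) := by
  have hmeas : AEStronglyMeasurable (fun z : ℝ => z ^ (p - 1) / (z ^ 2 + t ^ 2))
      (volume.restrict (Ioi (0:ℝ))) := by
    apply Measurable.aestronglyMeasurable
    fun_prop
  rw [← Ioc_union_Ioi_eq_Ioi (zero_le_one' ℝ), integrableOn_union]
  constructor
  · -- on (0, 1]: dominate by z^(p-1) / t^2
    have hg : IntegrableOn (fun z : ℝ => z ^ (p - 1) / t ^ 2) (Ioc 0 1) := by
      apply Integrable.div_const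
      have := (intervalIntegral.intervalIntegrable_rpow' (a := 0) (b := 1) (by linarith : (-1:ℝ) < p - 1))
      rwa [intervalIntegrable_iff_integrableOn_Ioc_of_le (by norm_num)] at this
    refine Integrable.mono hg (hmeas.mono_measure (Measure.restrict_mono Ioc_subset_Ioi_self le_rfl)) ?_
    rw [ae_restrict_iff' measurableSet_Ioc]
    refine ae_of_all _ fun z hz => ?_
    have hz0 : 0 < z := hz.1
    have h1 : 0 < z ^ (p - 1) := Real.rpow_pos_of_pos hz0 _
    have h2 : (0:ℝ) < z ^ 2 + t ^ 2 := by positivity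
    rw [Real.norm_eq_abs, Real.norm_eq_abs, abs_of_pos (by positivity), abs_of_pos (by positivity)]
    apply div_le_div_of_nonneg_left h1.le (by positivity)
    nlinarith [sq_nonneg z]
  · -- on (1, ∞): dominate by z^(p-3)
    have hg : IntegrableOn (fun z : ℝ => z ^ (p - 3)) (Ioi 1) :=
      integrableOn_Ioi_rpow_of_lt (by linarith) one_pos
    refine Integrable.mono hg (hmeas.mono_measure (Measure.restrict_mono (Ioi_subset_Ioi (by norm_num)) le_rfl)) ?_
    rw [ae_restrict_iff' measurableSet_Ioi]
    refine ae_of_all _ fun z hz => ?_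
    have hz1 : (1:ℝ) < z := hz
    have hz0 : (0:ℝ) < z := by linarith
    have h1 : 0 < z ^ (p - 1) := Real.rpow_pos_of_pos hz0 _
    have h2 : (0:ℝ) < z ^ 2 + t ^ 2 := by positivity
    rw [Real.norm_eq_abs, Real.norm_eq_abs, abs_of_pos (by positivity),
      abs_of_pos (Real.rpow_pos_of_pos hz0 _)]
    have h3 : z ^ (p - 3) = z ^ (p - 1) / z ^ 2 := by
      rw [eq_div_iff (by positivity), ← Real.rpow_natCast z 2, ← Real.rpow_add hz0]
      norm_num
      rw [show p - 3 + 2 = p - 1 by ring]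
    rw [h3]
    apply div_le_div_of_nonneg_left h1.le (by positivity)
    nlinarith [sq_nonneg t]

theorem coulson_jacobs_pair (p a b : ℝ) (hp0 : 0 < p) (hp2 : p < 2)
    (hab : b ≤ a) (hb : 0 ≤ b) (ha : 0 < a) :
    a ^ p - b ^ p = (p * Real.sin (p * π / 2) / π) *
      ∫ z in Ioi (0 : ℝ), z ^ (p - 1) * Real.log ((z ^ 2 + a ^ 2) / (z ^ 2 + b ^ 2)) := by
  set s := Real.sin (p * π / 2) with hsdef
  have hs : 0 < s := by
    apply Real.sin_pos_of_pos_of_lt_pi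
    · positivity
    · nlinarith [Real.pi_pos]
  have hπ : (0:ℝ) < π := Real.pi_pos
  set f : ℝ → ℝ → ℝ := fun t z => z ^ (p - 1) * (2 * t / (z ^ 2 + t ^ 2)) with hfdef
  -- value of the inner z-integral for t > 0
  have hM : ∀ t : ℝ, 0 < t → ∫ z in Ioi (0:ℝ), f t z = t ^ (p - 1) * (π / s) := by
    intro t ht
    have h1 : ∀ z, f t z = (2 * t) * (z ^ (p - 1) / (z ^ 2 + t ^ 2)) := by
      intro z; simp only [hfdef]; ring
    simp only [h1]
    rw [MeasureTheory.integral_const_mul, mellin_val p t hp0 hp2 ht]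
    have h2 : t * t ^ (p - 2) = t ^ (p - 1) := by
      rw [mul_comm, ← Real.rpow_add_one ht.ne', show p - 2 + 1 = p - 1 by ring]
    have h3 : Real.sin (π * (p / 2)) = s := by rw [hsdef, show π * (p / 2) = p * π / 2 by ring]
    rw [h3, ← h2]
    field_simp
  -- integrability of sections
  have hsecInt : ∀ t : ℝ, 0 < t → Integrable (f t) (volume.restrict (Ioi (0:ℝ))) := by
    intro t ht
    have := (mellin_integrable p t hp0 hp2 ht).const_mul (2 * t)
    refine this.congr (ae_of_all _ fun z => ?_)
    simp only [hfdef]; ring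
  -- pointwise identity: the log integrand equals an integral in t
  have hlog : ∀ z ∈ Ioi (0:ℝ), z ^ (p - 1) * Real.log ((z ^ 2 + a ^ 2) / (z ^ 2 + b ^ 2)) =
      ∫ t in Ioc b a, f t z := by
    intro z hz
    have hz0 : (0:ℝ) < z := hz
    have hzb : (0:ℝ) < z ^ 2 + b ^ 2 := by positivity
    have hza : (0:ℝ) < z ^ 2 + a ^ 2 := by positivity
    have hFTC : ∫ t in b..a, 2 * t / (z ^ 2 + t ^ 2) =
        Real.log (z ^ 2 + a ^ 2) - Real.log (z ^ 2 + b ^ 2) := by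
      refine intervalIntegral.integral_eq_sub_of_hasDerivAt
        (f := fun t : ℝ => Real.log (z ^ 2 + t ^ 2)) (fun t _ => ?_) ?_
      · have hd : HasDerivAt (fun t : ℝ => z ^ 2 + t ^ 2) (2 * t) t := by
          simpa using (hasDerivAt_pow 2 t).const_add (z ^ 2)
        exact hd.log (by positivity)
      · apply Continuous.intervalIntegrable
        exact (continuous_const.mul continuous_id).div
          (continuous_const.add (continuous_pow 2)) (fun t => by positivity)
    rw [Real.log_div hza.ne' hzb.ne', ← hFTC,
      ← intervalIntegral.integral_const_mul,
      intervalIntegral.integral_of_le hab]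
  have hJ : ∫ z in Ioi (0:ℝ), z ^ (p - 1) * Real.log ((z ^ 2 + a ^ 2) / (z ^ 2 + b ^ 2)) =
      ∫ z in Ioi (0:ℝ), ∫ t in Ioc b a, f t z :=
    setIntegral_congr_fun measurableSet_Ioi hlog
  -- Fubini
  have hprod : Integrable (Function.uncurry f)
      ((volume.restrict (Ioc b a)).prod (volume.restrict (Ioi (0:ℝ)))) := by
    have hmeas : AEStronglyMeasurable (Function.uncurry f)
        ((volume.restrict (Ioc b a)).prod (volume.restrict (Ioi (0:ℝ)))) := by
      apply Measurable.aestronglyMeasurable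
      simp only [hfdef, Function.uncurry]
      fun_prop
    rw [MeasureTheory.integrable_prod_iff hmeas]
    constructor
    · rw [ae_restrict_iff' measurableSet_Ioc]
      exact ae_of_all _ fun t ht => hsecInt t (lt_of_le_of_lt hb ht.1)
    · have heq : ∀ᵐ t ∂(volume.restrict (Ioc b a)),
          (∫ z, ‖f t z‖ ∂(volume.restrict (Ioi (0:ℝ)))) = t ^ (p - 1) * (π / s) := by
        rw [ae_restrict_iff' measurableSet_Ioc]
        refine ae_of_all _ fun t ht => ?_
        have ht0 : 0 < t := lt_of_le_of_lt hb ht.1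
        rw [← hM t ht0]
        refine setIntegral_congr_fun measurableSet_Ioi fun z hz => ?_
        have hz0 : (0:ℝ) < z := hz
        rw [Real.norm_eq_abs, abs_of_nonneg]
        simp only [hfdef]
        positivity
      have hri : IntervalIntegrable (fun t : ℝ => t ^ (p - 1)) volume b a :=
        intervalIntegral.intervalIntegrable_rpow' (by linarith)
      rw [intervalIntegrable_iff_integrableOn_Ioc_of_le hab] at hri
      exact Integrable.congr (hri.mul_const (π / s)) (heq.mono fun t h => h.symm)
  have hswap : ∫ z in Ioi (0:ℝ), ∫ t in Ioc b a, f t z =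
      ∫ t in Ioc b a, ∫ z in Ioi (0:ℝ), f t z :=
    (MeasureTheory.integral_integral_swap hprod).symm
  have hout : ∫ t in Ioc b a, ∫ z in Ioi (0:ℝ), f t z = (π / s) * ((a ^ p - b ^ p) / p) := by
    rw [setIntegral_congr_fun measurableSet_Ioc
      (fun t ht => hM t (lt_of_le_of_lt hb ht.1))]
    rw [← intervalIntegral.integral_of_le hab]
    rw [show (fun t : ℝ => t ^ (p - 1) * (π / s)) = fun t : ℝ => t ^ (p - 1) * (π / s) from rfl]
    rw [intervalIntegral.integral_mul_const, integral_rpow (Or.inl (by linarith))]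
    rw [show p - 1 + 1 = p by ring]
    ring
  rw [hJ, hswap, hout]
  field_simp
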